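/- Over ℚ, for all 1 ≤ d ≤ n-1 and N = n+d, the following identity of polynomials holds in ℚ[x_1,...,x_{n+d}]: C(n,d) x_1···x_d = ∑_{j=0}^{d} (-1)^j c_j ∑_{J} e_d(x_J), where c_j = C(n-1,d)/C(n-1,d-j) and the inner sum ranges over all n-element subsets J ⊆ {1,...,n+d} with |J ∩ {1,...,d}| = d-j, and e_d(x_J) denotes the elementary symmetric polynomial of degree d in the variables indexed by J. -/

import Mathlib

open MvPolynomial

/-- The elementary symmetric polynomial of degree `d` in the variables indexed by `S`. -/
noncomputable def esymmOn (K : Type*) [Field K] {N : ℕ} (S : Finset (Fin N)) (d : ℕ) :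
    MvPolynomial (Fin N) K :=
  ∑ T ∈ Finset.powersetCard d S, ∏ i ∈ T, X i

namespace ElimAux

open Finset


lemma trinom (N a b : ℕ) :
    N.choose a * (N - a).choose b = N.choose (a + b) * (a + b).choose a := by
  rcases le_or_gt (a + b) N with h | h
  · have := Nat.choose_mul (n := N) (Nat.le_add_right a b)
    rwa [Nat.add_sub_cancel_left, eq_comm] at this
  · rw [Nat.choose_eq_zero_of_lt h, zero_mul]
    rcases le_or_gt a N with ha | ha
    · rw [Nat.choose_eq_zero_of_lt (show N - a < b by omega), mul_zero]
    · rw [Nat.choose_eq_zero_of_lt ha, zero_mul]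

lemma ratio (n s k : ℕ) (hs : 1 ≤ s) (hsn : s ≤ n) :
    (n - 1).choose k * (n - 1 - k).choose (s - 1) =
      (n - 1).choose (s - 1) * (n - s).choose k := by
  have h1 := trinom (n - 1) k (s - 1)
  have h2 := trinom (n - 1) (s - 1) k
  have e1 : n - 1 - (s - 1) = n - s := by omega
  have e2 : s - 1 + k = k + (s - 1) := by omega
  have e3 : (k + (s - 1)).choose k = (k + (s - 1)).choose (s - 1) :=
    Nat.choose_symm_add
  rw [e1, e2] at h2
  rw [h1, e3, h2]

lemma stepA (s r M : ℕ) :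
    ∑ m ∈ range (s + 2), (-1 : ℚ) ^ m * ((s + 1).choose m) * ((M + (s + 1 - m)).choose (r + 1))
      = ∑ m ∈ range (s + 1), (-1 : ℚ) ^ m * (s.choose m) * ((M + (s - m)).choose r) := by
  set f : ℕ → ℚ := fun m => ((M + (s + 1 - m)).choose (r + 1) : ℚ) with hf
  set G : ℕ → ℚ := fun m => (-1 : ℚ) ^ m * ((s + 1).choose m) * f m with hG
  set g : ℕ → ℚ := fun m => (-1 : ℚ) ^ m * (s.choose m) * f m with hg
  set H : ℕ → ℚ := fun m => (-1 : ℚ) ^ m * (s.choose m) * ((M + (s - m)).choose (r + 1) : ℚ)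
    with hH
  have fsucc : ∀ i, i ≤ s → f (i + 1) = ((M + (s - i)).choose (r + 1) : ℚ) := by
    intro i hi
    simp only [hf]
    congr 2
    omega
  calc ∑ m ∈ range (s + 2), G m
      = ∑ i ∈ range (s + 1), G (i + 1) + G 0 := Finset.sum_range_succ' G (s + 1)
    _ = ∑ i ∈ range (s + 1), (g (i + 1) + (-1) * H i) + g 0 := by
        congr 1
        · apply Finset.sum_congr rfl
          intro i hi
          have hi' : i ≤ s := by simpa [Nat.lt_succ_iff] using hi
          simp only [hG, hg, hH]
          rw [Nat.choose_succ_succ s i, fsucc i hi']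
          push_cast
          ring
        · simp [hG, hg]
    _ = (∑ i ∈ range (s + 1), g (i + 1) + g 0) + (-1) * ∑ i ∈ range (s + 1), H i := by
        rw [Finset.sum_add_distrib, Finset.mul_sum]
        ring
    _ = (∑ m ∈ range (s + 2), g m) + (-1) * ∑ i ∈ range (s + 1), H i := by
        rw [Finset.sum_range_succ' g (s + 1)]
    _ = (∑ m ∈ range (s + 1), g m) + (-1) * ∑ i ∈ range (s + 1), H i := by
        rw [Finset.sum_range_succ g (s + 1)]
        have : g (s + 1) = 0 := by
          simp [hg, Nat.choose_eq_zero_of_lt (Nat.lt_succ_self s)]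
        rw [this, add_zero]
    _ = ∑ m ∈ range (s + 1), (g m + (-1) * H m) := by
        rw [Finset.sum_add_distrib, Finset.mul_sum]
    _ = ∑ m ∈ range (s + 1), (-1 : ℚ) ^ m * (s.choose m) * ((M + (s - m)).choose r) := by
        apply Finset.sum_congr rfl
        intro m hm
        have hm' : m ≤ s := by simpa [Nat.lt_succ_iff] using hm
        simp only [hg, hH, hf]
        have e : M + (s + 1 - m) = (M + (s - m)) + 1 := by omega
        rw [e, Nat.choose_succ_succ (M + (s - m)) r]
        push_cast
        ring

lemma altsum (s M : ℕ) :
    ∑ m ∈ range (s + 2), (-1 : ℚ) ^ m * ((s + 1).choose m) * ((M + (s + 1 - m)).choose s) = 0 := by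
  induction s generalizing M with
  | zero => simp [Finset.sum_range_succ]
  | succ s ih =>
      rw [stepA (s + 1) s M]
      exact ih M



variable {α : Type*} [DecidableEq α]

lemma card_filter_superset (S D : Finset α) (hSD : S ⊆ D) (k : ℕ) (hk : S.card ≤ k) :
    ((powersetCard k D).filter (fun A => S ⊆ A)).card
      = (D.card - S.card).choose (k - S.card) := by
  rw [show D.card - S.card = (D \ S).card from (card_sdiff_of_subset hSD).symm,
    ← Finset.card_powersetCard (k - S.card) (D \ S)]
  apply Finset.card_nbij' (fun A => A \ S) (fun B => B ∪ S)
  · intro A hA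
    simp only [mem_coe, mem_filter, mem_powersetCard] at hA
    obtain ⟨⟨hAD, hAcard⟩, hSA⟩ := hA
    rw [mem_coe, mem_powersetCard]
    exact ⟨sdiff_subset_sdiff hAD Subset.rfl, by rw [card_sdiff_of_subset hSA, hAcard]⟩
  · intro B hB
    rw [mem_coe, mem_powersetCard] at hB
    obtain ⟨hBD, hBcard⟩ := hB
    have hdisj : Disjoint B S := (sdiff_disjoint.mono_left hBD)
    simp only [mem_coe, mem_filter, mem_powersetCard]
    refine ⟨⟨union_subset (hBD.trans sdiff_subset) hSD, ?_⟩, subset_union_right⟩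
    rw [card_union_of_disjoint hdisj, hBcard]
    omega
  · intro A hA
    simp only [mem_coe, mem_filter, mem_powersetCard] at hA
    exact sdiff_union_of_subset hA.2
  · intro B hB
    rw [mem_coe, mem_powersetCard] at hB
    exact union_sdiff_cancel_right (sdiff_disjoint.mono_left hB.1)

lemma count_eq [Fintype α] (D T : Finset α) (n k : ℕ)
    (hD : D.card ≤ n) (huniv : Fintype.card α = n + D.card)
    (hT : T.card = D.card) (hk : k ≤ D.card) :
    (((powersetCard n (univ : Finset α)).filter
        (fun J => (J ∩ D).card = k)).filter (fun J => T ⊆ J)).card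
      = if (T ∩ D).card ≤ k then
          (D.card - (T ∩ D).card).choose (k - (T ∩ D).card) * (n - D.card + (T ∩ D).card).choose k
        else 0 := by
  set d := D.card with hd
  set t := (T ∩ D).card with ht
  have htd : t ≤ d := card_le_card inter_subset_right
  have htT : (T \ D).card = d - t := by
    have := card_inter_add_card_sdiff T D
    omega
  by_cases htk : t ≤ k
  swap
  · rw [if_neg htk]
    rw [Finset.card_eq_zero, Finset.filter_eq_empty_iff]
    intro J hJ
    simp only [mem_filter, mem_powersetCard] at hJ
    intro hTJ
    exact htk (hJ.2 ▸ card_le_card (inter_subset_inter hTJ Subset.rfl))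
  rw [if_pos htk]
  have hDc : Dᶜ.card = n := by
    rw [card_compl]
    omega
  have hbij :
      (((powersetCard n (univ : Finset α)).filter
          (fun J => (J ∩ D).card = k)).filter (fun J => T ⊆ J)).card
        = (((powersetCard k D).filter (fun A => T ∩ D ⊆ A)) ×ˢ
           ((powersetCard (n - k) Dᶜ).filter (fun B => T \ D ⊆ B))).card := by
    apply Finset.card_nbij' (fun J => (J ∩ D, J \ D)) (fun p => p.1 ∪ p.2)
    · intro J hJ
      simp only [mem_coe, mem_filter, mem_powersetCard] at hJ
      obtain ⟨⟨⟨_, hJcard⟩, hJD⟩, hTJ⟩ := hJ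
      simp only [mem_coe, mem_product, mem_filter, mem_powersetCard]
      have h1 : (J \ D).card = n - k := by
        have := card_inter_add_card_sdiff J D
        omega
      exact ⟨⟨⟨inter_subset_right, hJD⟩, inter_subset_inter hTJ Subset.rfl⟩,
        ⟨⟨fun x hx => by simp [Finset.mem_compl, (mem_sdiff.mp hx).2], h1⟩,
          sdiff_subset_sdiff hTJ Subset.rfl⟩⟩
    · intro p hp
      simp only [mem_coe, mem_product, mem_filter, mem_powersetCard] at hp
      obtain ⟨⟨⟨hAD, hAcard⟩, hTA⟩, ⟨⟨hBD, hBcard⟩, hTB⟩⟩ := hp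
      have hBD' : ∀ x ∈ p.2, x ∉ D := fun x hx => by
        have := hBD hx; simpa [Finset.mem_compl] using this
      have hdisj : Disjoint p.1 p.2 :=
        Finset.disjoint_left.mpr fun x hx1 hx2 => hBD' x hx2 (hAD hx1)
      have hinter : (p.1 ∪ p.2) ∩ D = p.1 := by
        ext x
        simp only [mem_inter, mem_union]
        constructor
        · rintro ⟨h1 | h1, h2⟩
          · exact h1
          · exact absurd h2 (hBD' x h1)
        · intro h
          exact ⟨Or.inl h, hAD h⟩
      simp only [mem_coe, mem_filter, mem_powersetCard]
      refine ⟨⟨⟨subset_univ _, ?_⟩, by rw [hinter, hAcard]⟩, ?_⟩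
      · rw [card_union_of_disjoint hdisj, hAcard, hBcard]
        omega
      · intro x hx
        by_cases hxD : x ∈ D
        · exact mem_union_left _ (hTA (mem_inter.mpr ⟨hx, hxD⟩))
        · exact mem_union_right _ (hTB (mem_sdiff.mpr ⟨hx, hxD⟩))
    · intro J hJ
      ext x
      simp only [mem_union, mem_inter, mem_sdiff]
      tauto
    · intro p hp
      simp only [mem_coe, mem_product, mem_filter, mem_powersetCard] at hp
      obtain ⟨⟨⟨hAD, hAcard⟩, hTA⟩, ⟨⟨hBD, hBcard⟩, hTB⟩⟩ := hp
      have hBD' : ∀ x ∈ p.2, x ∉ D := fun x hx => by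
        have := hBD hx; simpa [Finset.mem_compl] using this
      have hinter : (p.1 ∪ p.2) ∩ D = p.1 := by
        ext x
        simp only [mem_inter, mem_union]
        constructor
        · rintro ⟨h1 | h1, h2⟩
          · exact h1
          · exact absurd h2 (hBD' x h1)
        · intro h
          exact ⟨Or.inl h, hAD h⟩
      have hsdiff : (p.1 ∪ p.2) \ D = p.2 := by
        ext x
        simp only [mem_sdiff, mem_union]
        constructor
        · rintro ⟨h1 | h1, h2⟩
          · exact absurd (hAD h1) h2
          · exact h1
        · intro h
          exact ⟨Or.inr h, hBD' x h⟩
      exact Prod.ext hinter hsdiff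
  rw [hbij, Finset.card_product,
    card_filter_superset (T ∩ D) D inter_subset_right k htk]
  by_cases hkn : d - t ≤ n - k
  · rw [card_filter_superset (T \ D) Dᶜ (fun x hx => by
      simp [Finset.mem_compl, (mem_sdiff.mp hx).2]) (n - k) (by omega)]
    rw [hDc, htT]
    congr 1
    have e1 : n - (d - t) = n - d + t := by omega
    have e2 : n - k - (d - t) = (n - d + t) - k := by omega
    rw [e1, e2, Nat.choose_symm (by omega)]
  · have hY : ((powersetCard (n - k) Dᶜ).filter (fun B => T \ D ⊆ B)) = ∅ := by
      rw [Finset.filter_eq_empty_iff]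
      intro B hB hTB
      rw [mem_powersetCard] at hB
      have := card_le_card hTB
      omega
    rw [hY]
    have : (n - d + t).choose k = 0 := Nat.choose_eq_zero_of_lt (by omega)
    rw [this]
    simp

lemma neg_one_pow_sub (s i : ℕ) (h : i ≤ s) : (-1 : ℚ) ^ (s - i) = (-1) ^ s * (-1) ^ i := by
  have h2 : (-1 : ℚ) ^ i * (-1) ^ i = 1 := by
    rw [← pow_add, show i + i = 2 * i from by omega, pow_mul]
    norm_num
  have : (-1 : ℚ) ^ (s - i) * ((-1) ^ i * (-1) ^ i) = (-1) ^ s * (-1) ^ i := by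
    rw [← mul_assoc, ← pow_add, show s - i + i = s from by omega]
  rwa [h2, mul_one] at this

lemma scalar (n d t : ℕ) (hd : 1 ≤ d) (hdn : d ≤ n - 1) (ht : t ≤ d) :
    ∑ j ∈ range (d + 1),
        (-1 : ℚ) ^ j * (((n - 1).choose d : ℚ) / ((n - 1).choose (d - j) : ℚ))
          * (if t ≤ d - j then
              (((d - t).choose (d - j - t) * (n - d + t).choose (d - j) : ℕ) : ℚ) else 0)
      = if t = d then (n.choose d : ℚ) else 0 := by
  have hn : d + 1 ≤ n := by omega
  set F : ℕ → ℚ := fun j =>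
    (-1 : ℚ) ^ j * (((n - 1).choose d : ℚ) / ((n - 1).choose (d - j) : ℚ))
      * (if t ≤ d - j then
          (((d - t).choose (d - j - t) * (n - d + t).choose (d - j) : ℕ) : ℚ) else 0) with hF
  rw [← Finset.sum_range_reflect F (d + 1)]
  have hGF : ∀ k ∈ range (d + 1), F (d + 1 - 1 - k)
      = (-1 : ℚ) ^ (d - k) * (((n - 1).choose d : ℚ) / ((n - 1).choose k : ℚ))
          * (if t ≤ k then
              (((d - t).choose (k - t) * (n - d + t).choose k : ℕ) : ℚ) else 0) := by
    intro k hk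
    rw [mem_range] at hk
    have e0 : d + 1 - 1 - k = d - k := by omega
    have e : d - (d - k) = k := by omega
    rw [e0]
    simp only [hF, e]
  rw [Finset.sum_congr rfl hGF]
  by_cases htd : t = d
  · subst htd
    rw [if_pos rfl]
    rw [Finset.sum_eq_single_of_mem t (self_mem_range_succ t)]
    · have hne : ((n - 1).choose t : ℚ) ≠ 0 := by
        exact_mod_cast (Nat.choose_pos hdn).ne'
      have e : n - t + t = n := by omega
      rw [if_pos le_rfl, Nat.sub_self, e]
      simp [hne]
    · intro b hb hbt
      rw [mem_range] at hb
      rw [if_neg (by omega), mul_zero]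
  · rw [if_neg htd]
    have hts : t < d := by omega
    set s := d - t with hs
    have hs1 : 1 ≤ s := by omega
    have hterm : ∀ k ∈ range (d + 1),
        (-1 : ℚ) ^ (d - k) * (((n - 1).choose d : ℚ) / ((n - 1).choose k : ℚ))
          * (if t ≤ k then
              ((s.choose (k - t) * (n - d + t).choose k : ℕ) : ℚ) else 0)
        = (((n - 1).choose d : ℚ) / ((n - 1).choose (s - 1) : ℚ))
            * ((-1 : ℚ) ^ (d - k) * (if t ≤ k then
                ((s.choose (k - t) * (n - 1 - k).choose (s - 1) : ℕ) : ℚ) else 0)) := by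
      intro k hk
      rw [mem_range] at hk
      by_cases htk : t ≤ k
      · rw [if_pos htk, if_pos htk]
        have hk1 : ((n - 1).choose k : ℚ) ≠ 0 := by
          exact_mod_cast (Nat.choose_pos (show k ≤ n - 1 by omega)).ne'
        have hk2 : ((n - 1).choose (s - 1) : ℚ) ≠ 0 := by
          exact_mod_cast (Nat.choose_pos (show s - 1 ≤ n - 1 by omega)).ne'
        have hr' : ((n - 1).choose k : ℚ) * ((n - 1 - k).choose (s - 1) : ℚ)
            = ((n - 1).choose (s - 1) : ℚ) * ((n - d + t).choose k : ℚ) := by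
          have hr := ratio n s k hs1 (by omega)
          rw [show n - s = n - d + t from by omega] at hr
          exact_mod_cast congrArg (Nat.cast : ℕ → ℚ) hr
        have key : (((n - d + t).choose k : ℕ) : ℚ) / ((n - 1).choose k : ℚ)
            = (((n - 1 - k).choose (s - 1) : ℕ) : ℚ) / ((n - 1).choose (s - 1) : ℚ) := by
          rw [div_eq_div_iff hk1 hk2]
          linear_combination -hr'
        have lhs_eq : (-1 : ℚ) ^ (d - k)
              * (((n - 1).choose d : ℚ) / ((n - 1).choose k : ℚ))
              * ((s.choose (k - t) * (n - d + t).choose k : ℕ) : ℚ)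
            = ((-1 : ℚ) ^ (d - k) * ((n - 1).choose d : ℚ) * (s.choose (k - t) : ℚ))
                * ((((n - d + t).choose k : ℕ) : ℚ) / ((n - 1).choose k : ℚ)) := by
          push_cast
          ring
        have rhs_eq : (((n - 1).choose d : ℚ) / ((n - 1).choose (s - 1) : ℚ))
              * ((-1 : ℚ) ^ (d - k)
                * ((s.choose (k - t) * (n - 1 - k).choose (s - 1) : ℕ) : ℚ))
            = ((-1 : ℚ) ^ (d - k) * ((n - 1).choose d : ℚ) * (s.choose (k - t) : ℚ))
                * ((((n - 1 - k).choose (s - 1) : ℕ) : ℚ) / ((n - 1).choose (s - 1) : ℚ)) := by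
          push_cast
          ring
        rw [lhs_eq, rhs_eq, key]
      · rw [if_neg htk, if_neg htk, mul_zero, mul_zero, mul_zero]
    have hzero : ∑ k ∈ range (d + 1), ((-1 : ℚ) ^ (d - k) * (if t ≤ k then
        ((s.choose (k - t) * (n - 1 - k).choose (s - 1) : ℕ) : ℚ) else 0)) = 0 := by
      set H : ℕ → ℚ := fun k =>
        (-1 : ℚ) ^ (d - k) * (if t ≤ k then
          ((s.choose (k - t) * (n - 1 - k).choose (s - 1) : ℕ) : ℚ) else 0) with hH
      rw [← Finset.sum_range_add_sum_Ico H (show t ≤ d + 1 by omega)]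
      have h0 : ∑ k ∈ range t, H k = 0 := by
        apply Finset.sum_eq_zero
        intro k hk
        rw [mem_range] at hk
        simp only [hH]
        rw [if_neg (by omega), mul_zero]
      rw [h0, zero_add, Finset.sum_Ico_eq_sum_range]
      rw [show d + 1 - t = s + 1 from by omega]
      have hterm2 : ∀ i ∈ range (s + 1),
          H (t + i) = (-1 : ℚ) ^ s * ((-1 : ℚ) ^ i * (s.choose i : ℚ)
            * (((n - 1 - d) + (s - i)).choose (s - 1) : ℚ)) := by
        intro i hi
        rw [mem_range] at hi
        have his : i ≤ s := by omega
        simp only [hH]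
        rw [if_pos (by omega)]
        rw [show d - (t + i) = s - i from by omega, neg_one_pow_sub s i his]
        rw [show t + i - t = i from by omega]
        rw [show n - 1 - (t + i) = (n - 1 - d) + (s - i) from by omega]
        push_cast
        ring
      rw [Finset.sum_congr rfl hterm2, ← Finset.mul_sum]
      obtain ⟨ss, hss⟩ : ∃ ss, s = ss + 1 := ⟨s - 1, by omega⟩
      rw [hss]
      have hS := altsum ss (n - 1 - d)
      rw [show ss + 1 + 1 = ss + 2 from rfl]
      simp only [Nat.add_sub_cancel]
      rw [hS, mul_zero]
    rw [Finset.sum_congr rfl hterm, ← Finset.mul_sum, hzero, mul_zero]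


end ElimAux

/- The elimination identity over ℚ in `ℚ[x_1,…,x_{n+d}]`:
`C(n,d) x_1 ⋯ x_d = ∑_{j=0}^d (-1)^j c_j ∑_J e_d(x_J)` with
`c_j = C(n-1,d)/C(n-1,d-j)`, where `J` ranges over the `n`-element subsets of
`{1,…,n+d}` with `|J ∩ {1,…,d}| = d-j`. -/
theorem elimination_identity (n d : ℕ) (hd : 1 ≤ d) (hdn : d ≤ n - 1) :
    (C ((n.choose d : ℚ)) : MvPolynomial (Fin (n + d)) ℚ)
        * ∏ i ∈ Finset.univ.filter (fun i : Fin (n + d) => (i : ℕ) < d), X i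
      = ∑ j ∈ Finset.range (d + 1),
          (-1 : MvPolynomial (Fin (n + d)) ℚ) ^ j
            * C (((n - 1).choose d : ℚ) / ((n - 1).choose (d - j) : ℚ))
            * ∑ J ∈ (Finset.powersetCard n (Finset.univ : Finset (Fin (n + d)))).filter
                (fun J => (J ∩ Finset.univ.filter (fun i : Fin (n + d) => (i : ℕ) < d)).card
                  = d - j),
                esymmOn ℚ J d := by
  classical
  have hn : d + 1 ≤ n := by omega
  set D : Finset (Fin (n + d)) :=
    Finset.univ.filter (fun i : Fin (n + d) => (i : ℕ) < d) with hD
  have hDcard : D.card = d := by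
    have hlt : d < n + d := by omega
    have : D = Finset.Iio (⟨d, hlt⟩ : Fin (n + d)) := by
      ext i
      simp [hD, Fin.lt_def]
    rw [this, Fin.card_Iio]
  set P := Finset.powersetCard d (Finset.univ : Finset (Fin (n + d))) with hP
  have hDP : D ∈ P := Finset.mem_powersetCard.mpr ⟨Finset.subset_univ D, hDcard⟩
  set cnt : ℕ → Finset (Fin (n + d)) → ℕ := fun j T =>
    (((Finset.powersetCard n (Finset.univ : Finset (Fin (n + d)))).filter
      (fun J => (J ∩ D).card = d - j)).filter (fun J => T ⊆ J)).card with hcnt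
  set q : Finset (Fin (n + d)) → ℚ := fun T =>
    ∑ j ∈ Finset.range (d + 1),
      (-1 : ℚ) ^ j * (((n - 1).choose d : ℚ) / ((n - 1).choose (d - j) : ℚ)) * (cnt j T : ℚ)
    with hq
  -- step 1 : expand esymm sums
  have step1 : ∀ j : ℕ,
      ∑ J ∈ (Finset.powersetCard n (Finset.univ : Finset (Fin (n + d)))).filter
          (fun J => (J ∩ D).card = d - j), esymmOn ℚ J d
        = ∑ T ∈ P, (cnt j T) • (∏ i ∈ T, (X i : MvPolynomial (Fin (n + d)) ℚ)) := by
    intro j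
    have hesymm : ∀ J : Finset (Fin (n + d)), esymmOn ℚ J d
        = ∑ T ∈ P, if T ⊆ J then (∏ i ∈ T, (X i : MvPolynomial (Fin (n + d)) ℚ)) else 0 := by
      intro J
      have hps : Finset.powersetCard d J = P.filter (fun T => T ⊆ J) := by
        ext T
        simp only [Finset.mem_powersetCard, Finset.mem_filter, hP]
        constructor
        · rintro ⟨h1, h2⟩
          exact ⟨⟨Finset.subset_univ T, h2⟩, h1⟩
        · rintro ⟨⟨_, h2⟩, h1⟩
          exact ⟨h1, h2⟩
      rw [esymmOn, hps, Finset.sum_filter]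
    calc ∑ J ∈ (Finset.powersetCard n (Finset.univ : Finset (Fin (n + d)))).filter
          (fun J => (J ∩ D).card = d - j), esymmOn ℚ J d
        = ∑ J ∈ (Finset.powersetCard n (Finset.univ : Finset (Fin (n + d)))).filter
            (fun J => (J ∩ D).card = d - j),
            ∑ T ∈ P, if T ⊆ J then (∏ i ∈ T, (X i : MvPolynomial (Fin (n + d)) ℚ)) else 0 :=
          Finset.sum_congr rfl fun J _ => hesymm J
      _ = ∑ T ∈ P, ∑ J ∈ (Finset.powersetCard n (Finset.univ : Finset (Fin (n + d)))).filter
            (fun J => (J ∩ D).card = d - j),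
            if T ⊆ J then (∏ i ∈ T, (X i : MvPolynomial (Fin (n + d)) ℚ)) else 0 :=
          Finset.sum_comm
      _ = ∑ T ∈ P, (cnt j T) • (∏ i ∈ T, (X i : MvPolynomial (Fin (n + d)) ℚ)) := by
          apply Finset.sum_congr rfl
          intro T _
          rw [← Finset.sum_filter, Finset.sum_const, hcnt]
  -- step 2 : swap sums and collect scalars
  have step2 :
      ∑ j ∈ Finset.range (d + 1),
          (-1 : MvPolynomial (Fin (n + d)) ℚ) ^ j
            * C (((n - 1).choose d : ℚ) / ((n - 1).choose (d - j) : ℚ))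
            * ∑ T ∈ P, (cnt j T) • (∏ i ∈ T, (X i : MvPolynomial (Fin (n + d)) ℚ))
        = ∑ T ∈ P, C (q T) * (∏ i ∈ T, (X i : MvPolynomial (Fin (n + d)) ℚ)) := by
    have inner : ∀ j T, (-1 : MvPolynomial (Fin (n + d)) ℚ) ^ j
          * C (((n - 1).choose d : ℚ) / ((n - 1).choose (d - j) : ℚ))
          * ((cnt j T) • (∏ i ∈ T, (X i : MvPolynomial (Fin (n + d)) ℚ)))
        = C ((-1 : ℚ) ^ j * (((n - 1).choose d : ℚ) / ((n - 1).choose (d - j) : ℚ))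
              * (cnt j T : ℚ)) * (∏ i ∈ T, (X i : MvPolynomial (Fin (n + d)) ℚ)) := by
      intro j T
      rw [nsmul_eq_mul,
        show ((cnt j T : ℕ) : MvPolynomial (Fin (n + d)) ℚ) = C ((cnt j T : ℚ)) from
          (map_natCast (C : ℚ →+* MvPolynomial (Fin (n + d)) ℚ) (cnt j T)).symm,
        show ((-1 : MvPolynomial (Fin (n + d)) ℚ) ^ j) = C ((-1 : ℚ) ^ j) from by
          rw [map_pow, map_neg, map_one],
        ← map_mul, ← mul_assoc, ← map_mul]
    calc ∑ j ∈ Finset.range (d + 1),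
          (-1 : MvPolynomial (Fin (n + d)) ℚ) ^ j
            * C (((n - 1).choose d : ℚ) / ((n - 1).choose (d - j) : ℚ))
            * ∑ T ∈ P, (cnt j T) • (∏ i ∈ T, (X i : MvPolynomial (Fin (n + d)) ℚ))
        = ∑ j ∈ Finset.range (d + 1), ∑ T ∈ P,
            C ((-1 : ℚ) ^ j * (((n - 1).choose d : ℚ) / ((n - 1).choose (d - j) : ℚ))
              * (cnt j T : ℚ)) * (∏ i ∈ T, (X i : MvPolynomial (Fin (n + d)) ℚ)) := by
          apply Finset.sum_congr rfl
          intro j _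
          rw [Finset.mul_sum]
          exact Finset.sum_congr rfl fun T _ => inner j T
      _ = ∑ T ∈ P, ∑ j ∈ Finset.range (d + 1),
            C ((-1 : ℚ) ^ j * (((n - 1).choose d : ℚ) / ((n - 1).choose (d - j) : ℚ))
              * (cnt j T : ℚ)) * (∏ i ∈ T, (X i : MvPolynomial (Fin (n + d)) ℚ)) :=
          Finset.sum_comm
      _ = ∑ T ∈ P, C (q T) * (∏ i ∈ T, (X i : MvPolynomial (Fin (n + d)) ℚ)) := by
          apply Finset.sum_congr rfl
          intro T _
          rw [← Finset.sum_mul, ← map_sum]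
  -- step 3 : evaluate q
  have hq_eval : ∀ T ∈ P, q T = if T = D then (n.choose d : ℚ) else 0 := by
    intro T hT
    rw [Finset.mem_powersetCard] at hT
    obtain ⟨-, hTcard⟩ := hT
    have ht : (T ∩ D).card ≤ d := by
      calc (T ∩ D).card ≤ T.card := Finset.card_le_card Finset.inter_subset_left
        _ = d := hTcard
    have hc : ∀ j ∈ Finset.range (d + 1), ((cnt j T : ℕ) : ℚ)
        = (if (T ∩ D).card ≤ d - j then
            (((d - (T ∩ D).card).choose (d - j - (T ∩ D).card)
              * (n - d + (T ∩ D).card).choose (d - j) : ℕ) : ℚ) else 0) := by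
      intro j hj
      rw [Finset.mem_range] at hj
      have := ElimAux.count_eq D T n (d - j) (by omega) (by simp [hDcard, Fintype.card_fin])
        (by rw [hTcard, hDcard]) (by omega)
      rw [hDcard] at this
      rw [show cnt j T = (if (T ∩ D).card ≤ d - j then
        (d - (T ∩ D).card).choose (d - j - (T ∩ D).card)
          * (n - d + (T ∩ D).card).choose (d - j) else 0) from this]
      simp [apply_ite (Nat.cast : ℕ → ℚ)]
    have hsc := ElimAux.scalar n d ((T ∩ D).card) hd hdn ht
    calc q T = ∑ j ∈ Finset.range (d + 1),
        (-1 : ℚ) ^ j * (((n - 1).choose d : ℚ) / ((n - 1).choose (d - j) : ℚ))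
          * (if (T ∩ D).card ≤ d - j then
              (((d - (T ∩ D).card).choose (d - j - (T ∩ D).card)
                * (n - d + (T ∩ D).card).choose (d - j) : ℕ) : ℚ) else 0) :=
        Finset.sum_congr rfl fun j hj => by rw [hc j hj]
      _ = if (T ∩ D).card = d then (n.choose d : ℚ) else 0 := hsc
      _ = if T = D then (n.choose d : ℚ) else 0 := ?_
    have hiff : (T ∩ D).card = d ↔ T = D := by
      constructor
      · intro h
        have h1 : T ∩ D = T := Finset.eq_of_subset_of_card_le Finset.inter_subset_left
          (by rw [h, hTcard])
        have h2 : T ⊆ D := by rw [← h1]; exact Finset.inter_subset_right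
        exact Finset.eq_of_subset_of_card_le h2 (by rw [hTcard, hDcard])
      · intro h
        rw [h, Finset.inter_self, hDcard]
    by_cases hcase : T = D
    · rw [if_pos hcase, if_pos (hiff.mpr hcase)]
    · rw [if_neg hcase, if_neg (fun h => hcase (hiff.mp h))]
  -- final assembly
  rw [Finset.sum_congr rfl fun j _ => by rw [step1 j]]
  rw [step2]
  rw [Finset.sum_congr rfl fun T hT => by
    rw [hq_eval T hT, apply_ite C, map_zero, ite_mul, zero_mul]]
  rw [Finset.sum_ite_eq' P D
    (fun T => C ((n.choose d : ℚ)) * (∏ i ∈ T, (X i : MvPolynomial (Fin (n + d)) ℚ)))]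
  rw [if_pos hDP]
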